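/- Let a, b ∈ lie_2 (the free Lie algebra on generators x, y) satisfy the following three equations in lie_3 (generators x, y, z): (i) −a(x+y,z) + a(x,y+z) − a(x,y) = 0; (ii) a(y,z) − a(x+y,z) + b(x,y+z) − b(x,y) = 0; (iii) b(y,z) − b(x+y,z) + b(x,y+z) = 0. Then there exist scalars α, β ∈ k such that a = α • y and b = β • x. (Equivalently, the kernel of the differential d: dert_2 → dert_3 on tangential derivations is two-dimensional, spanned by r = (y,0) and t = (y,x), so H²(dert, d) = k·r ⊕ k·t.) -/

import Mathlib

open FreeLieAlgebra

attribute [local instance] LieRing.ofAssociativeRing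

section Aux

variable {k : Type} [Field k]

/-- Composition of a Lie hom with a lift is the lift of the composed generator map. -/
lemma lie_comp_lift {n m : ℕ} (g : FreeLieAlgebra k (Fin n) →ₗ⁅k⁆ FreeLieAlgebra k (Fin m))
    (u v : FreeLieAlgebra k (Fin n)) (a : FreeLieAlgebra k (Fin 2)) :
    g (lift k ![u, v] a) = lift k ![g u, g v] a := by
  have : g.comp (lift k ![u, v]) = lift k ![g u, g v] := by
    apply hom_ext
    intro x
    fin_cases x <;> simp
  exact DFunLike.congr_fun this a

lemma lift_of_of (a : FreeLieAlgebra k (Fin 2)) :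
    lift k ![of k (0 : Fin 2), of k (1 : Fin 2)] a = a := by
  have : lift k ![of k (0 : Fin 2), of k (1 : Fin 2)]
      = (LieHom.id : FreeLieAlgebra k (Fin 2) →ₗ⁅k⁆ FreeLieAlgebra k (Fin 2)) := by
    apply hom_ext
    intro x
    fin_cases x <;> simp
  rw [this]; rfl

/-- If both generators map into the span of `w`, the lift is `(scalar) • w`. -/
lemma lift_smul_single {n : ℕ} (w : FreeLieAlgebra k (Fin n)) (c : Fin 2 → k)
    (a : FreeLieAlgebra k (Fin 2)) :
    lift k (fun i => c i • w) a = (lift k c a) • w := by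
  let μ : k →ₗ⁅k⁆ FreeLieAlgebra k (Fin n) :=
    { toLinearMap := LinearMap.toSpanSingleton k _ w
      map_lie' := by
        intro x y
        simp [LinearMap.toSpanSingleton_apply, Ring.lie_def, smul_smul, mul_comm]
        }
  have : (lift k (fun i => c i • w) : FreeLieAlgebra k (Fin 2) →ₗ⁅k⁆ _)
      = μ.comp (lift k c) := by
    apply hom_ext
    intro x
    simp only [lift_of_apply, LieHom.comp_apply]
    rfl
  rw [this]
  rfl

lemma lift_zero_left {n : ℕ} (w : FreeLieAlgebra k (Fin n)) (a : FreeLieAlgebra k (Fin 2)) :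
    lift k ![0, w] a = (lift k ![(0 : k), 1] a) • w := by
  have h : (![0, w] : Fin 2 → FreeLieAlgebra k (Fin n))
      = fun i => ![(0 : k), 1] i • w := by
    funext i; fin_cases i <;> simp
  rw [h, lift_smul_single]

lemma lift_zero_right {n : ℕ} (w : FreeLieAlgebra k (Fin n)) (a : FreeLieAlgebra k (Fin 2)) :
    lift k ![w, 0] a = (lift k ![(1 : k), 0] a) • w := by
  have h : (![w, 0] : Fin 2 → FreeLieAlgebra k (Fin n))
      = fun i => ![(1 : k), 0] i • w := by
    funext i; fin_cases i <;> simp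
  rw [h, lift_smul_single]

end Aux

/-- `H²(dert, d) = k·r ⊕ k·t`: if the tangential derivation `u = (a, b)` of `lie_2`
satisfies `d u = 0`, i.e. the three displayed equations in `lie_3` hold, then
`a = α • y` and `b = β • x` for some scalars `α, β`. -/
theorem kernel_of_d_dert2 (k : Type) [Field k] [CharZero k]
    (a b : FreeLieAlgebra k (Fin 2))
    (h1 : -(lift k ![of k (0 : Fin 3) + of k (1 : Fin 3), of k (2 : Fin 3)] a)
        + lift k ![of k (0 : Fin 3), of k (1 : Fin 3) + of k (2 : Fin 3)] a
        - lift k ![of k (0 : Fin 3), of k (1 : Fin 3)] a = 0)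
    (h2 : lift k ![of k (1 : Fin 3), of k (2 : Fin 3)] a
        - lift k ![of k (0 : Fin 3) + of k (1 : Fin 3), of k (2 : Fin 3)] a
        + lift k ![of k (0 : Fin 3), of k (1 : Fin 3) + of k (2 : Fin 3)] b
        - lift k ![of k (0 : Fin 3), of k (1 : Fin 3)] b = 0)
    (h3 : lift k ![of k (1 : Fin 3), of k (2 : Fin 3)] b
        - lift k ![of k (0 : Fin 3) + of k (1 : Fin 3), of k (2 : Fin 3)] b
        + lift k ![of k (0 : Fin 3), of k (1 : Fin 3) + of k (2 : Fin 3)] b = 0) :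
    ∃ α β : k, a = α • of k (1 : Fin 2) ∧ b = β • of k (0 : Fin 2) := by
  set X := of k (0 : Fin 2)
  set Y := of k (1 : Fin 2)
  -- the substitution x ↦ 0, y ↦ X, z ↦ Y
  set ψ : FreeLieAlgebra k (Fin 3) →ₗ⁅k⁆ FreeLieAlgebra k (Fin 2) :=
    lift k ![0, X, Y] with hψ
  -- the substitution x ↦ X, y ↦ Y, z ↦ 0
  set ψ' : FreeLieAlgebra k (Fin 3) →ₗ⁅k⁆ FreeLieAlgebra k (Fin 2) :=
    lift k ![X, Y, 0] with hψ'
  have ψ0 : ψ (of k (0 : Fin 3)) = 0 := by rw [hψ]; simp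
  have ψ1 : ψ (of k (1 : Fin 3)) = X := by rw [hψ]; simp
  have ψ2 : ψ (of k (2 : Fin 3)) = Y := by rw [hψ]; simp
  have ψ'0 : ψ' (of k (0 : Fin 3)) = X := by rw [hψ']; simp
  have ψ'1 : ψ' (of k (1 : Fin 3)) = Y := by rw [hψ']; simp
  have ψ'2 : ψ' (of k (2 : Fin 3)) = 0 := by rw [hψ']; simp
  set α := lift k ![(0 : k), 1] a with hα
  set β := lift k ![(1 : k), 0] b with hβ
  refine ⟨α, β, ?_, ?_⟩
  · have H := congrArg ψ h1
    rw [map_zero, _root_.map_sub, _root_.map_add, _root_.map_neg,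
      lie_comp_lift, lie_comp_lift, lie_comp_lift,
      _root_.map_add, _root_.map_add, ψ0, ψ1, ψ2, zero_add] at H
    rw [lift_of_of, lift_zero_left, lift_zero_left, ← hα] at H
    have : a = α • (X + Y) - α • X := by linear_combination (norm := module) -H
    rw [this]
    module
  · have H := congrArg ψ' h3
    rw [map_zero, _root_.map_add, _root_.map_sub,
      lie_comp_lift, lie_comp_lift, lie_comp_lift,
      _root_.map_add, _root_.map_add, ψ'0, ψ'1, ψ'2, add_zero] at H
    rw [lift_of_of, lift_zero_right, lift_zero_right, ← hβ] at H
    have : b = β • (X + Y) - β • Y := by linear_combination (norm := module) H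
    rw [this]
    module
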